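/- Let G be a digraph, k ≥ 1 a natural number, and s, t vertices with d := dist_G(s,t) < ∞. Suppose that no simple s-to-t path in G has length ℓ with d + k ≤ ℓ ≤ d + 3k − 1, and that there exists a simple s-to-t path of length at least d + k. Then there exist a natural number p, distinct vertices x ≠ y with dist_G(s,x) = dist_G(s,y) = p, and paths P_start, P_mid, P_end such that: (a) P_start is a shortest s-to-x path in G; (b) P_mid is an x-to-y path of length at least 2k contained in the induced subgraph G_{≥p} on {v : dist_G(s,v) ≥ p}; (c) P_end is a y-to-t path contained in G_{≥p}; and (d) P_mid and P_end are internally vertex-disjoint. -/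

import Mathlib

variable {V : Type*}

/-- `w` is a directed walk from `u` to `v` in the digraph with arc relation `A`:
a nonempty list of vertices whose consecutive members are joined by arcs,
starting at `u` and ending at `v`. -/
def IsDiWalk (A : V → V → Prop) (u v : V) (w : List V) : Prop :=
  w.Chain' A ∧ w.head? = some u ∧ w.getLast? = some v

/-- The length (number of arcs) of a walk represented as its list of vertices. -/
def walkLength (w : List V) : ℕ :=
  w.length - 1

/-- `w` is a simple directed path from `u` to `v`. -/
def IsDiPath (A : V → V → Prop) (u v : V) (w : List V) : Prop :=
  IsDiWalk A u v w ∧ w.Nodup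

/-- Directed distance from `u` to `v`: the minimum length of a directed
`u`-to-`v` walk, or `⊤` if `v` is unreachable from `u`. -/
noncomputable def ddist (A : V → V → Prop) (u v : V) : ℕ∞ :=
  ⨅ (w : List V) (_ : IsDiWalk A u v w), (walkLength w : ℕ∞)

/-- The internal (non-endpoint) vertices of a path represented as a list. -/
def internalVerts (w : List V) : List V :=
  w.tail.dropLast

/-- Two paths are internally vertex-disjoint if no internal vertex of either
lies on the other. -/
def InternallyDisjoint (w₁ w₂ : List V) : Prop :=
  (∀ a ∈ internalVerts w₁, a ∉ w₂) ∧ (∀ a ∈ internalVerts w₂, a ∉ w₁)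

/-- All vertices of `w` lie in the induced subgraph `G_{≥p}` (with respect to
source `s`), i.e. have distance at least `p` from `s`. A path satisfying
`IsDiPath A x y w` together with `InGeq A s p w` is exactly a path of the
induced subgraph of `G` on `{v : dist_G(s,v) ≥ p}`. -/
def InGeq (A : V → V → Prop) (s : V) (p : ℕ) (w : List V) : Prop :=
  ∀ a ∈ w, (p : ℕ∞) ≤ ddist A s a

section
variable {A : V → V → Prop} {u v x s t : V} {w w₁ w₂ : List V}

lemma IsDiWalk.ne_nil (h : IsDiWalk A u v w) : w ≠ [] := by
  rintro rfl; simp [IsDiWalk] at h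

lemma IsDiWalk.length_pos (h : IsDiWalk A u v w) : 0 < w.length :=
  List.length_pos_iff.mpr h.ne_nil

lemma ddist_le_walkLength (h : IsDiWalk A u v w) : ddist A u v ≤ (walkLength w : ℕ∞) :=
  iInf_le_of_le w (iInf_le _ h)

lemma exists_walk_of_ddist_ne_top (h : ddist A u v ≠ ⊤) :
    ∃ w, IsDiWalk A u v w ∧ (walkLength w : ℕ∞) = ddist A u v := by
  classical
  have hne : ∃ w, IsDiWalk A u v w := by
    by_contra hc
    push_neg at hc
    exact h (by simp [ddist, iInf_eq_top]; intro w hw; exact absurd hw (hc w))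
  have hL : ∃ L, ∃ w, IsDiWalk A u v w ∧ walkLength w = L :=
    ⟨walkLength hne.choose, hne.choose, hne.choose_spec, rfl⟩
  obtain ⟨w0, hw0, hlen⟩ := Nat.find_spec hL
  refine ⟨w0, hw0, le_antisymm ?_ (ddist_le_walkLength hw0)⟩
  refine le_iInf fun w' => le_iInf fun hw' => ?_
  rw [hlen]
  exact_mod_cast Nat.find_min' hL ⟨w', hw', rfl⟩

lemma walk_take (h : IsDiWalk A u v w) {r : ℕ} (hr : r < w.length) :
    IsDiWalk A u (w[r]'hr) (w.take (r+1)) := by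
  refine ⟨h.1.take _, ?_, ?_⟩
  · rw [List.head?_take]; simp [h.2.1]
  · rw [List.getLast?_eq_getElem?, List.length_take]
    have : (r + 1) ⊓ w.length = r + 1 := by omega
    rw [this]
    simp only [Nat.add_sub_cancel, List.getElem?_take]
    rw [if_pos (by omega), List.getElem?_eq_getElem hr]

lemma walkLength_take {r : ℕ} (hr : r < w.length) : walkLength (w.take (r+1)) = r := by
  simp [walkLength, List.length_take]; omega

lemma walk_drop (h : IsDiWalk A u v w) {r : ℕ} (hr : r < w.length) :
    IsDiWalk A (w[r]'hr) v (w.drop r) := by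
  refine ⟨h.1.drop _, ?_, ?_⟩
  · rw [List.head?_drop, List.getElem?_eq_getElem hr]
  · rw [List.getLast?_drop, if_neg (by omega)]; exact h.2.2

lemma walkLength_drop {r : ℕ} : walkLength (w.drop r) = w.length - 1 - r := by
  simp [walkLength, List.length_drop]; omega

lemma walk_append (h₁ : IsDiWalk A u v w₁) (h₂ : IsDiWalk A v x w₂) :
    IsDiWalk A u x (w₁ ++ w₂.tail) := by
  obtain ⟨c₂, hh₂, hl₂⟩ := h₂
  have hw₂ : w₂ = v :: w₂.tail := by
    cases w₂ with
    | nil => simp at hh₂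
    | cons a l => simp at hh₂; simp [hh₂]
  refine ⟨?_, ?_, ?_⟩
  · show List.IsChain A _
    rw [List.isChain_append]
    refine ⟨h₁.1, List.IsChain.tail c₂, ?_⟩
    intro a ha b hb
    rw [h₁.2.2] at ha
    simp at ha; subst ha
    have := (List.isChain_cons.mp (show List.IsChain A (v :: w₂.tail) from hw₂ ▸ c₂)).1
    exact this b hb
  · cases w₁ with
    | nil => exact absurd rfl h₁.ne_nil
    | cons a l => simpa using h₁.2.1
  · rw [List.getLast?_append]
    rcases List.eq_nil_or_concat w₂.tail with ht | ⟨l', b, hb⟩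
    · rw [hw₂, ht] at hl₂
      simp only [List.getLast?_singleton, Option.some.injEq] at hl₂
      rw [ht]
      simp [h₁.2.2, hl₂]
    · have hx : w₂.tail.getLast? = some x := by
        rw [hw₂, hb] at hl₂
        rw [hb]
        simp only [List.concat_eq_append] at hl₂ ⊢
        rw [← List.cons_append] at hl₂
        rw [List.getLast?_append] at hl₂ ⊢
        simpa using hl₂
      simp [hx]

lemma walkLength_append (h₁ : IsDiWalk A u v w₁) (h₂ : IsDiWalk A v x w₂) :
    walkLength (w₁ ++ w₂.tail) = walkLength w₁ + walkLength w₂ := by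
  have p1 := h₁.length_pos
  have p2 := h₂.length_pos
  simp [walkLength, List.length_append, List.length_tail]; omega

lemma ddist_triangle (h : IsDiWalk A u x w) :
    ddist A s x ≤ ddist A s u + (walkLength w : ℕ∞) := by
  rcases eq_or_ne (ddist A s u) ⊤ with htop | htop
  · simp [htop]
  · obtain ⟨w0, hw0, hlen⟩ := exists_walk_of_ddist_ne_top htop
    calc ddist A s x ≤ (walkLength (w0 ++ w.tail) : ℕ∞) :=
          ddist_le_walkLength (walk_append hw0 h)
      _ = (walkLength w0 : ℕ∞) + walkLength w := by
          rw [walkLength_append hw0 h]; push_cast; ring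
      _ = ddist A s u + walkLength w := by rw [hlen]

lemma ddist_self : ddist A s s = 0 := by
  have : IsDiWalk A s s [s] := ⟨List.IsChain.singleton s, rfl, rfl⟩
  have h := ddist_le_walkLength this
  simpa [walkLength] using h

lemma shortest_walk_pos (h : IsDiWalk A s x w)
    (hlen : (walkLength w : ℕ∞) = ddist A s x) {r : ℕ} (hr : r < w.length) :
    ddist A s (w[r]'hr) = (r : ℕ∞) := by
  have hle : ddist A s (w[r]'hr) ≤ (r : ℕ∞) := by
    have := ddist_le_walkLength (walk_take h hr)
    rwa [walkLength_take hr] at this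
  refine le_antisymm hle ?_
  by_contra hlt
  push_neg at hlt
  have hne : ddist A s (w[r]'hr) ≠ ⊤ := fun hc => by simp [hc] at hlt
  obtain ⟨r', hr'⟩ : ∃ m : ℕ, ddist A s (w[r]'hr) = (m : ℕ∞) := by
    lift (ddist A s (w[r]'hr)) to ℕ using hne with m hm
    exact ⟨m, rfl⟩
  rw [hr'] at hlt hle
  have hr'lt : r' < r := by exact_mod_cast hlt
  have htri := ddist_triangle (s := s) (walk_drop h hr)
  rw [← hlen, hr', walkLength_drop] at htri
  have : (walkLength w : ℕ∞) ≤ ((r' + (w.length - 1 - r) : ℕ) : ℕ∞) := by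
    exact_mod_cast htri
  have hN : walkLength w ≤ r' + (w.length - 1 - r) := by exact_mod_cast this
  unfold walkLength at hN
  omega

lemma shortest_walk_nodup (h : IsDiWalk A s x w)
    (hlen : (walkLength w : ℕ∞) = ddist A s x) : w.Nodup := by
  rw [List.nodup_iff_injective_get]
  intro i j hij
  have hi := shortest_walk_pos h hlen i.isLt
  have hj := shortest_walk_pos h hlen j.isLt
  simp only [List.get_eq_getElem] at hij
  rw [hij, hj] at hi
  have : (i : ℕ) = (j : ℕ) := by exact_mod_cast hi.symm
  exact Fin.ext this

end

/-- if no simple `s`-to-`t` path has length `ℓ` with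
`d + k ≤ ℓ ≤ d + 3k − 1` (`d = dist_G(s,t) < ∞`, `k ≥ 1`), but some simple
`s`-to-`t` path has length at least `d + k`, then there exist `p`, `x ≠ y` in
layer `p`, and paths `P_start`, `P_mid`, `P_end` satisfying properties (a)–(d). -/
theorem stmt12 (A : V → V → Prop) (k : ℕ) (hk : 1 ≤ k)
    (s t : V) (d : ℕ) (hd : ddist A s t = (d : ℕ∞))
    (hgap : ∀ Q : List V, IsDiPath A s t Q →
      ¬ (d + k ≤ walkLength Q ∧ walkLength Q ≤ d + 3 * k - 1))
    (hex : ∃ P : List V, IsDiPath A s t P ∧ d + k ≤ walkLength P) :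
    ∃ (p : ℕ) (x y : V), x ≠ y ∧
      ddist A s x = (p : ℕ∞) ∧ ddist A s y = (p : ℕ∞) ∧
      ∃ Pstart Pmid Pend : List V,
        IsDiPath A s x Pstart ∧ (walkLength Pstart : ℕ∞) = ddist A s x ∧
        IsDiPath A x y Pmid ∧ 2 * k ≤ walkLength Pmid ∧ InGeq A s p Pmid ∧
        IsDiPath A y t Pend ∧ InGeq A s p Pend ∧
        InternallyDisjoint Pmid Pend := by
  classical
  obtain ⟨P, hP, hPlen⟩ := hex
  obtain ⟨hPw, hPnd⟩ := hP
  set n := P.length with hn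
  have hn1 : 1 ≤ n := hPw.length_pos
  set m := n - 1 with hm
  have hwP : walkLength P = m := rfl
  set f : ℕ → ℕ := fun i => (ddist A s (P.getD i t)).toNat with hfdef
  -- distances along P are finite
  have hfin : ∀ i, i < n → ddist A s (P.getD i t) ≤ (i : ℕ∞) := by
    intro i hi
    rw [List.getD_eq_getElem P t hi]
    have := ddist_le_walkLength (walk_take hPw hi)
    rwa [walkLength_take hi] at this
  have hf : ∀ i, i < n → ddist A s (P.getD i t) = (f i : ℕ∞) := by
    intro i hi
    have hne : ddist A s (P.getD i t) ≠ ⊤ :=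
      ((hfin i hi).trans_lt (ENat.coe_lt_top i)).ne
    exact (ENat.coe_toNat hne).symm
  have hf' : ∀ i (hi : i < n), ddist A s (P[i]'hi) = (f i : ℕ∞) := by
    intro i hi
    have := hf i hi
    rwa [List.getD_eq_getElem P t hi] at this
  -- endpoints
  have hP0 : P.getD 0 t = s := by
    rw [List.getD_eq_getElem P t (by omega)]
    have h2 := hPw.2.1
    rw [List.head?_eq_getElem?, List.getElem?_eq_getElem (by omega : 0 < n)] at h2
    exact Option.some_injective _ h2
  have hPlast : P.getD m t = t := by
    rw [List.getD_eq_getElem P t (by omega)]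
    have h2 := hPw.2.2
    rw [List.getLast?_eq_getElem?, List.getElem?_eq_getElem (by omega : n - 1 < n)] at h2
    exact Option.some_injective _ h2
  have hf0 : f 0 = 0 := by
    have h2 := hf 0 (by omega)
    rw [hP0, ddist_self] at h2
    exact_mod_cast h2.symm
  have hfm : f m = d := by
    have h2 := hf m (by omega)
    rw [hPlast, hd] at h2
    exact_mod_cast h2.symm
  -- step inequality
  have hstep : ∀ i, i + 1 < n → f (i + 1) ≤ f i + 1 := by
    intro i hi
    have harc : A (P.getD i t) (P.getD (i+1) t) := by
      rw [List.getD_eq_getElem P t (by omega), List.getD_eq_getElem P t hi]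
      have h2 := List.isChain_iff_getElem.mp hPw.1 i (by omega)
      simpa using h2
    have hwalk : IsDiWalk A (P.getD i t) (P.getD (i+1) t) [P.getD i t, P.getD (i+1) t] :=
      ⟨List.isChain_pair.mpr harc, rfl, rfl⟩
    have h2 := ddist_triangle (s := s) hwalk
    rw [hf i (by omega), hf (i+1) hi] at h2
    have h3 : walkLength [P.getD i t, P.getD (i+1) t] = 1 := rfl
    rw [h3] at h2
    exact_mod_cast h2
  -- anchors
  set Anc : ℕ → Prop := fun i => i < n ∧ ∀ j, i ≤ j → j < n → f i ≤ f j with hAncDef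
  have anchor_path : ∀ i, Anc i → ∃ Q, IsDiPath A s t Q ∧ walkLength Q = f i + (m - i) := by
    intro i hi
    obtain ⟨hiN, hanch⟩ := hi
    have hx : ddist A s (P.getD i t) = (f i : ℕ∞) := hf i hiN
    obtain ⟨SP, hSPw, hSPlen⟩ := exists_walk_of_ddist_ne_top
      (h := by rw [hx]; exact (ENat.coe_lt_top _).ne)
    have hSPnd := shortest_walk_nodup hSPw hSPlen
    have hSPlenN : SP.length = f i + 1 := by
      have h1 : (walkLength SP : ℕ∞) = (f i : ℕ∞) := by rw [hSPlen, hx]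
      have h2 : walkLength SP = f i := by exact_mod_cast h1
      have h3 := hSPw.length_pos
      unfold walkLength at h2; omega
    have hdropw : IsDiWalk A (P.getD i t) t (P.drop i) := by
      have h2 := walk_drop hPw hiN
      rwa [List.getD_eq_getElem P t hiN]
    -- last vertex of SP
    have hlastSP : ∀ (h : f i < SP.length), SP[f i]'h = P.getD i t := by
      intro h
      have h2 := hSPw.2.2
      rw [List.getLast?_eq_getElem?, hSPlenN, Nat.add_sub_cancel,
        List.getElem?_eq_getElem h] at h2
      exact Option.some_injective _ h2
    refine ⟨SP ++ (P.drop i).tail, ⟨walk_append hSPw hdropw, ?_⟩, ?_⟩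
    · rw [List.nodup_append]
      refine ⟨hSPnd, ?_, ?_⟩
      · rw [List.tail_drop]
        exact List.Nodup.sublist (List.drop_suffix _ _).sublist hPnd
      · intro z hz z' hz' hzz'
        subst hzz'
        rw [List.mem_iff_getElem] at hz
        obtain ⟨r, hr, hrz⟩ := hz
        rw [List.tail_drop, List.mem_iff_getElem] at hz'
        obtain ⟨q, hq, hqz⟩ := hz'
        rw [List.getElem_drop] at hqz
        have hidx : i + 1 + q < n := by
          rw [List.length_drop] at hq; omega
        have hposr := shortest_walk_pos hSPw hSPlen hr
        rw [hrz] at hposr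
        have hdq : ddist A s z = (f (i+1+q) : ℕ∞) := by
          rw [← hqz]; exact hf' (i+1+q) hidx
        have hrn : r = f (i+1+q) := by
          rw [hposr] at hdq; exact_mod_cast hdq
        have hge : f i ≤ f (i+1+q) := hanch _ (by omega) hidx
        have hrfi : r = f i := by omega
        subst hrfi
        rw [hlastSP hr] at hrz
        rw [← hrz, List.getD_eq_getElem P t hiN] at hqz
        have := (hPnd.getElem_inj_iff).mp hqz
        omega
    · rw [walkLength_append hSPw hdropw, walkLength_drop]
      have h2 : walkLength SP = f i := by
        unfold walkLength; rw [hSPlenN]; omega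
      rw [h2]
  -- basic bound on walkLength P
  have hm3k : d + 3 * k ≤ m := by
    have h2 := hgap P ⟨hPw, hPnd⟩
    rw [hwP] at h2
    rw [hwP] at hPlen
    omega
  -- the greatest deep anchor a
  set PredA : ℕ → Prop := fun i => Anc i ∧ d + 3 * k ≤ f i + (m - i) with hPredADef
  have hPredA0 : PredA 0 := by
    refine ⟨⟨by omega, fun j _ _ => by rw [hf0]; omega⟩, by rw [hf0]; omega⟩
  set a := Nat.findGreatest PredA m with haDef
  have ha : PredA a := Nat.findGreatest_spec (Nat.zero_le m) hPredA0
  have haM : ∀ j, a < j → j ≤ m → ¬ PredA j := fun j h1 h2 =>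
    Nat.findGreatest_is_greatest h1 h2
  have haN : a < n := ha.1.1
  have ham : a < m := by
    rcases Nat.lt_or_ge a m with h | h
    · exact h
    · exfalso
      have : a = m := le_antisymm (Nat.findGreatest_le m) h
      have h2 := ha.2
      rw [this, hfm] at h2
      omega
  -- the least anchor after a
  have hAncm : Anc m := ⟨by omega, fun j h1 h2 => by
    have : j = m := by omega
    rw [this]⟩
  have hExB : ∃ j, Anc j ∧ a < j := ⟨m, hAncm, ham⟩
  set b := Nat.find hExB with hbDef
  obtain ⟨hbAnc, hab⟩ := Nat.find_spec hExB
  have hbmin : ∀ j, j < b → ¬ (Anc j ∧ a < j) := fun j h => Nat.find_min hExB h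
  have hbN : b < n := hbAnc.1
  have hbm : b ≤ m := by omega
  set p := f b with hpDef
  -- every index ≥ a+1 has f ≥ p
  have claimA : ∀ j, a + 1 ≤ j → j < n → p ≤ f j := by
    intro j hj hjn
    obtain ⟨c, hcmem, hcmin⟩ := Finset.exists_min_image (Finset.Icc j m) f
      ⟨j, by simp; omega⟩
    simp only [Finset.mem_Icc] at hcmem
    have hcAnc : Anc c := by
      refine ⟨by omega, fun j' h1 h2 => hcmin j' ?_⟩
      simp only [Finset.mem_Icc]; omega
    have hbc : b ≤ c := by
      by_contra h
      push_neg at h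
      exact hbmin c h ⟨hcAnc, by omega⟩
    have h1 : p ≤ f c := hbAnc.2 c hbc (by omega)
    have h2 : f c ≤ f j := hcmin j (by simp; omega)
    omega
  -- f a = p
  have claimB : f a = p := by
    have hab1 : f a ≤ p := ha.1.2 b (by omega) hbN
    by_contra hne
    have hlt : f a < p := by omega
    have ha1n : a + 1 < n := by omega
    have h1 : f (a+1) ≤ f a + 1 := hstep a ha1n
    have h2 : p ≤ f (a+1) := claimA (a+1) (le_refl _) ha1n
    have h3 : f (a+1) = p := by omega
    have h4 : PredA (a+1) := by
      refine ⟨⟨ha1n, fun j hj hjn => by rw [h3]; exact claimA j hj hjn⟩, ?_⟩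
      rw [h3]
      have := ha.2
      omega
    exact haM (a+1) (by omega) (by omega) h4
  -- the gap forces p + (m - b) small
  have claimC : p + (m - b) ≤ d + k - 1 := by
    obtain ⟨Q, hQ, hQlen⟩ := anchor_path b hbAnc
    have h2 := hgap Q hQ
    rw [hQlen] at h2
    rcases Nat.lt_or_ge (f b + (m - b)) (d + k) with h | h
    · omega
    · exfalso
      have h3 : d + 3 * k ≤ f b + (m - b) := by omega
      exact haM b hab hbm ⟨hbAnc, h3⟩
  have claimD : 2 * k + 1 ≤ b - a := by
    have h2 := ha.2
    rw [claimB] at h2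
    omega
  have hgeq : ∀ j, a ≤ j → j < n → p ≤ f j := by
    intro j hj hjn
    rcases Nat.eq_or_lt_of_le hj with h | h
    · rw [← h, claimB]
    · exact claimA j (by omega) hjn
  -- the witnesses
  refine ⟨p, P[a]'haN, P[b]'hbN, ?_, hf' a haN ▸ by rw [claimB], hf' b hbN, ?_⟩
  · intro h
    have := (hPnd.getElem_inj_iff).mp h
    omega
  obtain ⟨SP, hSPw, hSPlen⟩ := exists_walk_of_ddist_ne_top
    (h := by rw [hf' a haN]; exact (ENat.coe_lt_top _).ne)
  have hdropA := walk_drop hPw haN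
  have hba : b - a < (P.drop a).length := by rw [List.length_drop]; omega
  have hPmidw := walk_take hdropA hba
  have hPmidEnd : (P.drop a)[b - a]'hba = P[b]'hbN := by
    rw [List.getElem_drop]
    have h2 : a + (b - a) = b := by omega
    simp only [h2]
  rw [hPmidEnd] at hPmidw
  have hPmidLen : walkLength ((P.drop a).take (b - a + 1)) = b - a := walkLength_take hba
  have hPmidLength : ((P.drop a).take (b - a + 1)).length = b - a + 1 := by
    rw [List.length_take, List.length_drop]; omega
  have hPendw := walk_drop hPw hbN
  refine ⟨SP, (P.drop a).take (b - a + 1), P.drop b,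
    ⟨hSPw, shortest_walk_nodup hSPw hSPlen⟩, hSPlen, ⟨hPmidw, ?_⟩, ?_, ?_, ⟨hPendw, ?_⟩, ?_, ?_, ?_⟩
  · exact List.Nodup.sublist
      ((List.take_prefix _ _).sublist.trans (List.drop_suffix _ _).sublist) hPnd
  · rw [hPmidLen]; omega
  · -- InGeq for Pmid
    intro z hz
    rw [List.mem_iff_getElem] at hz
    obtain ⟨r, hr, hrz⟩ := hz
    rw [List.getElem_take, List.getElem_drop] at hrz
    have hidx : a + r < n := by
      rw [hPmidLength] at hr
      omega
    rw [← hrz, hf' (a + r) hidx]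
    exact_mod_cast hgeq (a + r) (by omega) hidx
  · exact List.Nodup.sublist (List.drop_suffix _ _).sublist hPnd
  · -- InGeq for Pend
    intro z hz
    rw [List.mem_iff_getElem] at hz
    obtain ⟨r, hr, hrz⟩ := hz
    rw [List.getElem_drop] at hrz
    have hidx : b + r < n := by
      rw [List.length_drop] at hr; omega
    rw [← hrz, hf' (b + r) hidx]
    exact_mod_cast hgeq (b + r) (by omega) hidx
  · -- internal disjointness, first component
    intro z hz hz'
    unfold internalVerts at hz
    rw [List.mem_iff_getElem] at hz
    obtain ⟨r, hr, hrz⟩ := hz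
    rw [List.mem_iff_getElem] at hz'
    obtain ⟨q, hq, hqz⟩ := hz'
    simp only [List.getElem_dropLast, List.getElem_tail, List.getElem_take,
      List.getElem_drop] at hrz hqz
    simp only [List.length_dropLast, List.length_tail, List.length_take,
      List.length_drop] at hr hq
    rw [← hqz] at hrz
    have := (hPnd.getElem_inj_iff).mp hrz
    omega
  · -- internal disjointness, second component
    intro z hz hz'
    unfold internalVerts at hz
    rw [List.mem_iff_getElem] at hz
    obtain ⟨r, hr, hrz⟩ := hz
    rw [List.mem_iff_getElem] at hz'
    obtain ⟨q, hq, hqz⟩ := hz'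
    simp only [List.getElem_dropLast, List.getElem_tail, List.getElem_take,
      List.getElem_drop] at hrz hqz
    simp only [List.length_dropLast, List.length_tail, List.length_take,
      List.length_drop] at hr hq
    rw [← hqz] at hrz
    have := (hPnd.getElem_inj_iff).mp hrz
    omega
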